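/- arXiv:0705.4159 — 4 statements merged into one kernel-verified Lean document; each statement's English description precedes it below -/
import Mathlib

section
/- For any free group F, the intersection of all terms of the lower central series of F is trivial, i.e. ⋂_{n=1}^∞ F_n = {e}. -/
open scoped Classical

namespace ResNilAux

/-! ### Shapes of matrices -/

variable {n : ℕ}

/-- `Shape d A` means `A p q = 0` whenever `q < p + d`.  `Shape 0` = upper triangular,
`Shape 1` = strictly upper triangular, etc. -/
def Shape (d : ℕ) (A : Matrix (Fin n) (Fin n) ℤ) : Prop :=
  ∀ p q : Fin n, (q : ℕ) < (p : ℕ) + d → A p q = 0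

theorem Shape.anti {d e : ℕ} (h : d ≤ e) {A : Matrix (Fin n) (Fin n) ℤ}
    (hA : Shape e A) : Shape d A := fun p q hq => hA p q (by omega)

theorem shape_zero (d : ℕ) : Shape d (0 : Matrix (Fin n) (Fin n) ℤ) := fun _ _ _ => rfl

theorem Shape.add {d : ℕ} {A B : Matrix (Fin n) (Fin n) ℤ} (hA : Shape d A) (hB : Shape d B) :
    Shape d (A + B) := fun p q h => by
  simp [Matrix.add_apply, hA p q h, hB p q h]

theorem Shape.neg {d : ℕ} {A : Matrix (Fin n) (Fin n) ℤ} (hA : Shape d A) :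
    Shape d (-A) := fun p q h => by simp [hA p q h]

theorem Shape.mul {d e : ℕ} {A B : Matrix (Fin n) (Fin n) ℤ} (hA : Shape d A) (hB : Shape e B) :
    Shape (d + e) (A * B) := by
  intro p q h
  rw [Matrix.mul_apply]
  apply Finset.sum_eq_zero
  intro m _
  by_cases hm : (m : ℕ) < (p : ℕ) + d
  · rw [hA p m hm, zero_mul]
  · rw [hB m q (by omega), mul_zero]

theorem Shape.eq_zero {A : Matrix (Fin n) (Fin n) ℤ} (hA : Shape n A) : A = 0 := by
  ext p q
  exact hA p q (by omega)

/-! ### The descending chain of subgroups of units -/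

/-- Units congruent to `1` modulo `Shape d`, on both sides. -/
def T (n d : ℕ) : Subgroup (Matrix (Fin n) (Fin n) ℤ)ˣ where
  carrier := {x | Shape d ((x : Matrix (Fin n) (Fin n) ℤ) - 1) ∧
    Shape d (((x⁻¹ : _ˣ) : Matrix (Fin n) (Fin n) ℤ) - 1)}
  one_mem' := by
    constructor <;> simpa using shape_zero (n := n) d
  mul_mem' := by
    rintro x y ⟨hx, hx'⟩ ⟨hy, hy'⟩
    constructor
    · have key : ((x * y : _ˣ) : Matrix (Fin n) (Fin n) ℤ) - 1 =
        ((x : Matrix (Fin n) (Fin n) ℤ) - 1) * ((y : Matrix (Fin n) (Fin n) ℤ) - 1) +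
          ((x : Matrix (Fin n) (Fin n) ℤ) - 1) + ((y : Matrix (Fin n) (Fin n) ℤ) - 1) := by
        push_cast
        noncomm_ring
      rw [key]
      exact (((hx.mul hy).anti (by omega)).add hx).add hy
    · have key : (((x * y)⁻¹ : _ˣ) : Matrix (Fin n) (Fin n) ℤ) - 1 =
        (((y⁻¹ : _ˣ) : Matrix (Fin n) (Fin n) ℤ) - 1) * (((x⁻¹ : _ˣ) : Matrix (Fin n) (Fin n) ℤ) - 1) +
          (((y⁻¹ : _ˣ) : Matrix (Fin n) (Fin n) ℤ) - 1) + (((x⁻¹ : _ˣ) : Matrix (Fin n) (Fin n) ℤ) - 1) := by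
        rw [mul_inv_rev]
        push_cast
        noncomm_ring
      rw [key]
      exact (((hy'.mul hx').anti (by omega)).add hy').add hx'
  inv_mem' := by
    rintro x ⟨hx, hx'⟩
    exact ⟨hx', by simpa using hx⟩

theorem T_anti {d e : ℕ} (h : d ≤ e) : T n e ≤ T n d := by
  rintro x ⟨hx, hx'⟩
  exact ⟨hx.anti h, hx'.anti h⟩

/-- The key commutator estimate. -/
theorem shape_commutator {d e : ℕ} {x y : (Matrix (Fin n) (Fin n) ℤ)ˣ}
    (hx : Shape d ((x : Matrix (Fin n) (Fin n) ℤ) - 1))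
    (hy : Shape e ((y : Matrix (Fin n) (Fin n) ℤ) - 1))
    (hx' : Shape 0 (((x⁻¹ : _ˣ) : Matrix (Fin n) (Fin n) ℤ) - 1))
    (hy' : Shape 0 (((y⁻¹ : _ˣ) : Matrix (Fin n) (Fin n) ℤ) - 1)) :
    Shape (d + e) (((x * y * x⁻¹ * y⁻¹ : _ˣ) : Matrix (Fin n) (Fin n) ℤ) - 1) := by
  set X : Matrix (Fin n) (Fin n) ℤ := (x : Matrix (Fin n) (Fin n) ℤ)
  set Y : Matrix (Fin n) (Fin n) ℤ := (y : Matrix (Fin n) (Fin n) ℤ)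
  set X' : Matrix (Fin n) (Fin n) ℤ := ((x⁻¹ : _ˣ) : Matrix (Fin n) (Fin n) ℤ)
  set Y' : Matrix (Fin n) (Fin n) ℤ := ((y⁻¹ : _ˣ) : Matrix (Fin n) (Fin n) ℤ)
  have hXX' : X * X' = 1 := by
    rw [← Units.val_mul, mul_inv_cancel, Units.val_one]
  have key : ((x * y * x⁻¹ * y⁻¹ : _ˣ) : Matrix (Fin n) (Fin n) ℤ) - 1 =
      ((X - 1) * (Y - 1) - (Y - 1) * (X - 1)) * (X' * Y') := by
    have hYY' : Y * Y' = 1 := by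
      rw [← Units.val_mul, mul_inv_cancel, Units.val_one]
    have h1 : ((x * y * x⁻¹ * y⁻¹ : _ˣ) : Matrix (Fin n) (Fin n) ℤ) = X * Y * X' * Y' := by
      rw [Units.val_mul, Units.val_mul, Units.val_mul]
    have h2 : (X - 1) * (Y - 1) - (Y - 1) * (X - 1) = X * Y - Y * X := by noncomm_ring
    rw [h1, h2, sub_mul]
    congr 1
    · rw [mul_assoc]
    · rw [mul_assoc Y X, ← mul_assoc X X', hXX', one_mul, hYY']
  have hcomm : Shape (d + e) ((X - 1) * (Y - 1) - (Y - 1) * (X - 1)) := by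
    have h1 : Shape (d + e) ((X - 1) * (Y - 1)) := hx.mul hy
    have h2 : Shape (d + e) ((Y - 1) * (X - 1)) := by
      have := hy.mul hx
      rwa [Nat.add_comm e d] at this
    rw [sub_eq_add_neg]
    exact h1.add h2.neg
  have hXY' : Shape 0 (X' * Y' - 1) := by
    have key' : X' * Y' - 1 = (X' - 1) * (Y' - 1) + (X' - 1) + (Y' - 1) := by noncomm_ring
    rw [key']
    exact (((hx'.mul hy').anti (by omega)).add hx').add hy'
  have expand : ((X - 1) * (Y - 1) - (Y - 1) * (X - 1)) * (X' * Y') =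
      ((X - 1) * (Y - 1) - (Y - 1) * (X - 1)) +
      ((X - 1) * (Y - 1) - (Y - 1) * (X - 1)) * (X' * Y' - 1) := by noncomm_ring
  rw [key, expand]
  exact hcomm.add ((hcomm.mul hXY').anti (by omega))

theorem commutator_mem_T {d : ℕ} {x y : (Matrix (Fin n) (Fin n) ℤ)ˣ}
    (hx : x ∈ T n d) (hy : y ∈ T n 1) : x * y * x⁻¹ * y⁻¹ ∈ T n (d + 1) := by
  obtain ⟨hx1, hx2⟩ := hx
  obtain ⟨hy1, hy2⟩ := hy
  constructor
  · exact shape_commutator hx1 hy1 (hx2.anti (by omega)) (hy2.anti (by omega))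
  · have : (x * y * x⁻¹ * y⁻¹)⁻¹ = y * x * y⁻¹ * x⁻¹ := by group
    rw [this]
    have := shape_commutator hy1 hx1 (hy2.anti (by omega)) (hx2.anti (by omega))
    rwa [Nat.add_comm 1 d] at this

/-- Lower central series of `T n 1` descends into the `T n d`. -/
theorem lcs_le (d : ℕ) :
    (⊤ : Subgroup ↥(T n 1)).lowerCentralSeries d ≤ (T n (d + 1)).subgroupOf (T n 1) := by
  induction d with
  | zero =>
    rw [Subgroup.lowerCentralSeries_zero, Subgroup.subgroupOf_self]
  | succ d ih =>
    have : (⊤ : Subgroup ↥(T n 1)).lowerCentralSeries (d + 1) = ⁅(⊤ : Subgroup ↥(T n 1)).lowerCentralSeries d, ⊤⁆ := rfl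
    rw [this]
    rw [Subgroup.commutator_le]
    intro g hg h _
    have hgT : (g : (Matrix (Fin n) (Fin n) ℤ)ˣ) ∈ T n (d + 1) := by
      have := ih hg
      rwa [Subgroup.mem_subgroupOf] at this
    have hhT : (h : (Matrix (Fin n) (Fin n) ℤ)ˣ) ∈ T n 1 := h.2
    rw [Subgroup.mem_subgroupOf]
    have key := commutator_mem_T hgT hhT
    simpa [commutatorElement_def] using key

/-! ### The Magnus-type matrices associated to a syllable word -/

variable {α : Type*}

/-- The nilpotent "step" matrix of a letter `j`, relative to a syllable word `S`. -/
noncomputable def NN (S : List (α × ℤ)) (j : α) :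
    Matrix (Fin (S.length + 1)) (Fin (S.length + 1)) ℤ :=
  Matrix.of fun p q =>
    if (q : ℕ) = (p : ℕ) + 1 ∧ ∃ h : (p : ℕ) < S.length, (S.get ⟨p, h⟩).1 = j then 1 else 0

theorem shape_NN (S : List (α × ℤ)) (j : α) : Shape 1 (NN S j) := by
  intro p q h
  simp only [NN, Matrix.of_apply, ite_eq_right_iff]
  rintro ⟨h1, -⟩
  omega

theorem NN_sq (S : List (α × ℤ)) (hS : S.Chain' fun p q => p.1 ≠ q.1) (j : α) :
    NN S j * NN S j = 0 := by
  ext p q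
  rw [Matrix.mul_apply, Matrix.zero_apply]
  apply Finset.sum_eq_zero
  intro m _
  simp only [NN, Matrix.of_apply]
  split_ifs with h1 h2
  · exfalso
    obtain ⟨hm, hp, hpj⟩ := h1
    obtain ⟨hq, hm', hmj⟩ := h2
    have hlt : (p : ℕ) < S.length - 1 := by omega
    have := List.isChain_iff_getElem.mp hS (p : ℕ) (by omega)
    apply this
    have heq : ((p : ℕ) + 1) = (m : ℕ) := by omega
    simp only [heq]
    rw [show S[(p : ℕ)].1 = j by simpa using hpj]
    simpa using hmj.symm
  all_goals simp

/-- The unipotent unit `1 + N j`. -/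
noncomputable def uu (S : List (α × ℤ)) (hS : S.Chain' fun p q => p.1 ≠ q.1) (j : α) :
    (Matrix (Fin (S.length + 1)) (Fin (S.length + 1)) ℤ)ˣ where
  val := 1 + NN S j
  inv := 1 - NN S j
  val_inv := by
    have h := NN_sq S hS j
    have key : (1 + NN S j) * (1 - NN S j) = 1 - NN S j * NN S j := by noncomm_ring
    rw [key, h, sub_zero]
  inv_val := by
    have h := NN_sq S hS j
    have key : (1 - NN S j) * (1 + NN S j) = 1 - NN S j * NN S j := by noncomm_ring
    rw [key, h, sub_zero]

theorem uu_zpow (S : List (α × ℤ)) (hS : S.Chain' fun p q => p.1 ≠ q.1) (j : α) (e : ℤ) :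
    ((uu S hS j ^ e : _ˣ) : Matrix (Fin (S.length + 1)) (Fin (S.length + 1)) ℤ) =
      1 + e • NN S j := by
  have hsq := NN_sq S hS j
  induction e using Int.induction_on with
  | zero => simp
  | succ k ih =>
    rw [zpow_add_one, Units.val_mul, ih]
    have : ((uu S hS j : _ˣ) : Matrix (Fin (S.length + 1)) (Fin (S.length + 1)) ℤ) =
      1 + NN S j := rfl
    rw [this, add_mul, one_mul, mul_add, mul_one, smul_mul_assoc, hsq, smul_zero, add_zero,
      add_smul, one_smul]
    abel
  | pred k ih =>
    rw [zpow_sub_one, Units.val_mul, ih]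
    have : ((uu S hS j)⁻¹ : _ˣ).val = 1 - NN S j := rfl
    rw [this, add_mul, one_mul, mul_sub, mul_one, smul_mul_assoc, hsq, smul_zero, sub_zero,
      sub_smul, one_smul]
    abel

theorem uu_mem_T1 (S : List (α × ℤ)) (hS : S.Chain' fun p q => p.1 ≠ q.1) (j : α) :
    uu S hS j ∈ T (S.length + 1) 1 := by
  constructor
  · have : ((uu S hS j : _ˣ) : Matrix (Fin (S.length + 1)) (Fin (S.length + 1)) ℤ) - 1 =
      NN S j := by
      show 1 + NN S j - 1 = NN S j
      abel
    rw [this]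
    exact shape_NN S j
  · have : (((uu S hS j)⁻¹ : _ˣ) : Matrix (Fin (S.length + 1)) (Fin (S.length + 1)) ℤ) - 1 =
      -(NN S j) := by
      show 1 - NN S j - 1 = -(NN S j)
      abel
    rw [this]
    exact (shape_NN S j).neg

/-! ### The corner–entry computation -/

/-- The matrix associated to a syllable. -/
noncomputable def ff (S : List (α × ℤ)) (p : α × ℤ) :
    Matrix (Fin (S.length + 1)) (Fin (S.length + 1)) ℤ :=
  1 + p.2 • NN S p.1

theorem entry_lemma (S : List (α × ℤ)) :
    ∀ t : ℕ, ∀ ht : t ≤ S.length,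
      (∀ q : Fin (S.length + 1), t < (q : ℕ) → (((S.take t).map (ff S)).prod) 0 q = 0) ∧
      (((S.take t).map (ff S)).prod 0 ⟨t, by omega⟩ = ((S.take t).map Prod.snd).prod) := by
  intro t
  induction t with
  | zero =>
    intro _
    constructor
    · intro q hq
      rw [List.take_zero, List.map_nil, List.prod_nil]
      exact Matrix.one_apply_ne (by intro h; rw [← h] at hq; simp at hq)
    · rw [List.take_zero, List.map_nil, List.prod_nil, List.map_nil, List.prod_nil]
      exact Matrix.one_apply_eq _
  | succ t ih =>
    intro ht
    have htlt : t < S.length := by omega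
    obtain ⟨ih1, ih2⟩ := ih (by omega)
    have hsplit : S.take (t + 1) = S.take t ++ [S.get ⟨t, htlt⟩] := by
      rw [List.take_succ]
      congr 1
      rw [List.getElem?_eq_getElem htlt]
      rfl
    set st := S.get ⟨t, htlt⟩ with hst
    have hprod : ((S.take (t + 1)).map (ff S)).prod =
        ((S.take t).map (ff S)).prod * ff S st := by
      rw [hsplit, List.map_append, List.prod_append, List.map_singleton, List.prod_singleton]
    set Q := ((S.take t).map (ff S)).prod with hQ
    -- entry formula for the product with one more factor
    have hmulN : ∀ q : Fin (S.length + 1), (Q * ff S st) 0 q =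
        Q 0 q + st.2 * ∑ m : Fin (S.length + 1), Q 0 m *
          (if (q : ℕ) = (m : ℕ) + 1 ∧ ∃ h : (m : ℕ) < S.length, (S.get ⟨m, h⟩).1 = st.1
            then 1 else 0) := by
      intro q
      rw [show ff S st = 1 + st.2 • NN S st.1 from rfl, mul_add, mul_one, Matrix.add_apply]
      congr 1
      rw [Matrix.mul_smul, Matrix.smul_apply, smul_eq_mul]
      congr 1
    constructor
    · intro q hq
      rw [hprod, hmulN]
      rw [ih1 q (by omega), zero_add]
      rw [Finset.sum_eq_zero, mul_zero]
      intro m _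
      by_cases hc : (q : ℕ) = (m : ℕ) + 1 ∧ ∃ h : (m : ℕ) < S.length, (S.get ⟨m, h⟩).1 = st.1
      · rw [ih1 m (by omega), zero_mul]
      · rw [if_neg hc, mul_zero]
    · rw [hprod, hmulN]
      rw [ih1 ⟨t + 1, by omega⟩ (by simp), zero_add]
      have hsum : ∑ m : Fin (S.length + 1), Q 0 m *
          (if ((⟨t + 1, by omega⟩ : Fin (S.length + 1)) : ℕ) = (m : ℕ) + 1 ∧
              ∃ h : (m : ℕ) < S.length, (S.get ⟨m, h⟩).1 = st.1 then 1 else 0) =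
          Q 0 ⟨t, by omega⟩ := by
        rw [Finset.sum_eq_single (⟨t, by omega⟩ : Fin (S.length + 1))]
        · rw [if_pos, mul_one]
          exact ⟨rfl, htlt, rfl⟩
        · intro m _ hm
          rw [if_neg, mul_zero]
          rintro ⟨h1, -⟩
          apply hm
          apply Fin.ext
          simpa using h1.symm
        · intro h
          exact absurd (Finset.mem_univ _) h
      rw [hsum, ih2]
      rw [hsplit, List.map_append, List.prod_append, List.map_singleton, List.prod_singleton]
      ring

/-! ### Syllable decomposition of free group elements -/

/-- A valid syllable word: adjacent letters are distinct, exponents are nonzero. -/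
def Ok (S : List (α × ℤ)) : Prop :=
  (S.Chain' fun p q => p.1 ≠ q.1) ∧ ∀ p ∈ S, p.2 ≠ 0

/-- The element of the free group represented by a syllable word. -/
def wordProd (S : List (α × ℤ)) : FreeGroup α :=
  (S.map fun p => FreeGroup.of p.1 ^ p.2).prod

theorem wordProd_nil : wordProd ([] : List (α × ℤ)) = 1 := rfl

theorem wordProd_cons (p : α × ℤ) (S : List (α × ℤ)) :
    wordProd (p :: S) = FreeGroup.of p.1 ^ p.2 * wordProd S := by
  simp [wordProd]

theorem cons_syll (x : α) (e : ℤ) (S : List (α × ℤ)) (h : Ok S) :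
    ∃ S', Ok S' ∧ wordProd S' = FreeGroup.of x ^ e * wordProd S := by
  by_cases he : e = 0
  · exact ⟨S, h, by simp [he]⟩
  obtain ⟨hchain, hnz⟩ := h
  match S with
  | [] =>
    refine ⟨[(x, e)], ⟨List.isChain_singleton _, ?_⟩, ?_⟩
    · rintro p hp
      simp at hp
      subst hp
      exact he
    · simp [wordProd]
  | (y, f) :: T =>
    by_cases hxy : x = y
    · subst hxy
      by_cases hef : e + f = 0
      · refine ⟨T, ⟨hchain.tail, fun p hp => hnz p (List.mem_cons_of_mem _ hp)⟩, ?_⟩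
        rw [wordProd_cons, ← mul_assoc, ← zpow_add, hef, zpow_zero, one_mul]
      · refine ⟨(x, e + f) :: T, ⟨?_, ?_⟩, ?_⟩
        · rcases T with - | ⟨⟨z, g⟩, T'⟩
          · exact List.isChain_singleton _
          · refine List.isChain_cons_cons.mpr ⟨?_, (List.isChain_cons_cons.mp hchain).2⟩
            exact (List.isChain_cons_cons.mp hchain).1
        · rintro p hp
          rcases List.mem_cons.mp hp with hp | hp
          · subst hp; exact hef
          · exact hnz p (List.mem_cons_of_mem _ hp)
        · rw [wordProd_cons, wordProd_cons, ← mul_assoc, ← zpow_add]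
    · refine ⟨(x, e) :: (y, f) :: T, ⟨List.isChain_cons_cons.mpr ⟨hxy, hchain⟩, ?_⟩, ?_⟩
      · rintro p hp
        rcases List.mem_cons.mp hp with hp | hp
        · subst hp; exact he
        · exact hnz p hp
      · rw [wordProd_cons]

theorem exists_syll (w : FreeGroup α) : ∃ S, Ok S ∧ wordProd S = w := by
  rw [← FreeGroup.mk_toWord (x := w)]
  generalize w.toWord = L
  induction L with
  | nil =>
    exact ⟨[], ⟨List.isChain_nil, by simp⟩, by rw [← FreeGroup.one_eq_mk]; rfl⟩
  | cons p L ih =>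
    obtain ⟨S, hok, hS⟩ := ih
    obtain ⟨x, b⟩ := p
    obtain ⟨S', hok', hS'⟩ := cons_syll x (if b then 1 else -1) S hok
    refine ⟨S', hok', ?_⟩
    rw [hS', hS]
    have : FreeGroup.mk ((x, b) :: L) = FreeGroup.mk [(x, b)] * FreeGroup.mk L := by
      rw [FreeGroup.mul_mk]
      rfl
    rw [this]
    congr 1
    cases b
    · show FreeGroup.of x ^ (-1 : ℤ) = _
      rw [zpow_neg_one]
      rfl
    · show FreeGroup.of x ^ (1 : ℤ) = _
      rw [zpow_one]
      rfl

end ResNilAux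

open ResNilAux in
/-- The lower central series of any free group has trivial intersection:
`⋂_{n≥1} F_n = {e}` (here `lowerCentralSeries F n` is the paper's `F_{n+1}`,
so the intersection over all terms is the same). -/
theorem stmt_0 (α : Type*) :
    (⨅ n : ℕ, (⊤ : Subgroup (FreeGroup α)).lowerCentralSeries n) = ⊥ := by
  rw [eq_bot_iff]
  intro w hw
  rw [Subgroup.mem_bot]
  obtain ⟨S, ⟨hchain, hnz⟩, rfl⟩ := exists_syll w
  rcases S with - | ⟨p0, S0⟩
  · rfl
  exfalso
  set S := p0 :: S0 with hSdef
  set k := S.length with hk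
  have hk1 : 1 ≤ k := by simp [hk, hSdef]
  -- the homomorphism into the unitriangular units
  set G := ↥(T (k + 1) 1) with hG
  let g : α → G := fun j => ⟨uu S hchain j, uu_mem_T1 S hchain j⟩
  let φ : FreeGroup α →* G := FreeGroup.lift g
  -- image lies deep in the lower central series
  have hmem : φ (wordProd S) ∈ (⊤ : Subgroup G).lowerCentralSeries k := by
    apply lowerCentralSeries.map φ k
    exact ⟨wordProd S, Subgroup.mem_iInf.mp hw k, rfl⟩
  have hTk : ((φ (wordProd S) : (Matrix (Fin (k + 1)) (Fin (k + 1)) ℤ)ˣ)) ∈ T (k + 1) (k + 1) := by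
    have := lcs_le (n := k + 1) k hmem
    rwa [Subgroup.mem_subgroupOf] at this
  have hone : ((((φ (wordProd S) : G) : (Matrix (Fin (k + 1)) (Fin (k + 1)) ℤ)ˣ)) :
      Matrix (Fin (k + 1)) (Fin (k + 1)) ℤ) = 1 := by
    have h0 := hTk.1.eq_zero
    have := sub_eq_zero.mp h0
    exact this
  -- compute the image explicitly as a product of matrices
  have hcompute : ((((φ (wordProd S) : G) : (Matrix (Fin (k + 1)) (Fin (k + 1)) ℤ)ˣ)) :
      Matrix (Fin (k + 1)) (Fin (k + 1)) ℤ) = ((S.map (ff S)).prod) := by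
    let χ : FreeGroup α →* Matrix (Fin (k + 1)) (Fin (k + 1)) ℤ :=
      (Units.coeHom _).comp (((T (k + 1) 1).subtype).comp φ)
    show χ (wordProd S) = _
    rw [wordProd, map_list_prod, List.map_map]
    congr 1
    apply List.map_congr_left
    intro p _
    show χ (FreeGroup.of p.1 ^ p.2) = ff S p
    have h1 : ((T (k + 1) 1).subtype).comp φ (FreeGroup.of p.1 ^ p.2) =
        (uu S hchain p.1) ^ p.2 := by
      rw [map_zpow]
      congr 1
      show ((φ (FreeGroup.of p.1) : G) : (Matrix (Fin (k + 1)) (Fin (k + 1)) ℤ)ˣ) = _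
      simp only [φ, FreeGroup.lift_apply_of, g]
    show (Units.coeHom _) (((T (k + 1) 1).subtype).comp φ (FreeGroup.of p.1 ^ p.2)) = ff S p
    rw [h1]
    show ((uu S hchain p.1 ^ p.2 : _ˣ) : Matrix (Fin (k + 1)) (Fin (k + 1)) ℤ) = ff S p
    rw [uu_zpow]
    rfl
  -- but the corner entry of the product is nonzero
  have hcorner := (entry_lemma S k (le_refl _)).2
  rw [List.take_length] at hcorner
  have hne : ((S.map Prod.snd).prod) ≠ 0 := by
    apply List.prod_ne_zero
    intro h0
    obtain ⟨p, hp, hp2⟩ := List.mem_map.mp h0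
    exact hnz p hp hp2
  apply hne
  rw [← hcorner, hcompute.symm, hone]
  apply Matrix.one_apply_ne
  intro hcontr
  have := congrArg Fin.val hcontr
  simp at this
end

section
/- Let F be the free group on generators a and b. Then the commutators [a,b] and [a²,b²] freely generate a free subgroup of F of rank 2. -/
open FreeGroup Pointwise

section General

variable {α : Type*} [DecidableEq α]

lemma reduce_cons_nil {c : α × Bool} {L : List (α × Bool)} (h : reduce L = []) :
    reduce (c :: L) = [c] := by rw [reduce.cons, h]

lemma reduce_cons_cons {c q : α × Bool} {L t : List (α × Bool)} (h : reduce L = q :: t) :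
    reduce (c :: L) = if c.1 = q.1 ∧ c.2 = !q.2 then t else c :: q :: t := by
  rw [reduce.cons, h]

lemma reduce_tail' {p : α × Bool} {L : List (α × Bool)} (h : reduce (p :: L) = p :: L) :
    reduce L = L := by
  rcases hL : reduce L with _ | ⟨q, t⟩
  · rw [reduce_cons_nil hL] at h
    injection h with h1 h2
    try exact h2
  · rw [reduce_cons_cons hL] at h
    split_ifs at h with hc
    · have h1 := congrArg List.length h
      have h2 : (reduce L).length ≤ L.length := Red.length_le reduce.red
      rw [hL] at h2
      simp at h1 h2
      omega
    · injection h with h1 h2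
      try exact h2

lemma head_ne' {p : α × Bool} {L : List (α × Bool)} (h : reduce (p :: L) = p :: L) :
    L.head? ≠ some (p.1, !p.2) := by
  intro hh
  rcases L with _ | ⟨q, t⟩
  · simp at hh
  · simp only [List.head?_cons, Option.some.injEq] at hh
    subst hh
    have ht := reduce_tail' h
    rw [reduce_cons_cons ht, if_pos (by simp)] at h
    have := congrArg List.length h
    simp at this
    omega

lemma reduce_append' : ∀ (P : List (α × Bool)) {w : List (α × Bool)},
    reduce P = P → reduce w = w →
    (∀ q, P.getLast? = some q → w.head? ≠ some (q.1, !q.2)) →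
    reduce (P ++ w) = P ++ w := by
  intro P
  induction P with
  | nil => intro w _ hw _; simpa using hw
  | cons c P' ih =>
    intro w hP hw hj
    have hP' : reduce P' = P' := reduce_tail' hP
    have hPw : reduce (P' ++ w) = P' ++ w := by
      apply ih hP' hw
      intro q hq
      apply hj
      rcases P' with _ | ⟨p, t⟩
      · simp at hq
      · rw [List.getLast?_cons_cons]; exact hq
    rw [List.cons_append]
    rcases hPw' : P' ++ w with _ | ⟨r, t⟩
    · exact reduce_singleton c
    · rw [hPw'] at hPw
      rw [reduce_cons_cons hPw, if_neg]
      rintro ⟨h1, h2⟩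
      have hr : r = (c.1, !c.2) := by
        ext
        · exact h1.symm
        · simp [h2]
      rcases P' with _ | ⟨p, t'⟩
      · simp only [List.nil_append] at hPw'
        exact hj c (by simp) (by rw [hPw', hr]; rfl)
      · simp only [List.cons_append, List.cons.injEq] at hPw'
        exact head_ne' hP (by rw [hPw'.1, hr]; rfl)

lemma reduce_append_cancel (P : List (α × Bool)) (q : α × Bool) {w₁ : List (α × Bool)}
    (hP : reduce P = P) (hw : reduce ((q.1, !q.2) :: w₁) = (q.1, !q.2) :: w₁)
    (hj : ∀ r, P.getLast? = some r → w₁.head? ≠ some (r.1, !r.2)) :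
    reduce (P ++ q :: (q.1, !q.2) :: w₁) = P ++ w₁ := by
  have e := reduce.Step.eq (@Red.Step.not _ P w₁ q.1 q.2)
  exact e.trans (reduce_append' P hP (reduce_tail' hw) hj)

end General

section Concrete

abbrev pa : Fin 2 × Bool := (0, true)
abbrev na : Fin 2 × Bool := (0, false)
abbrev pb : Fin 2 × Bool := (1, true)
abbrev nb : Fin 2 × Bool := (1, false)

lemma head_of_take {w : List (Fin 2 × Bool)} {p q : Fin 2 × Bool}
    (h : w.take 2 ≠ [p, q]) (hp : w.head? = some p) : w.tail.head? ≠ some q := by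
  rcases w with _ | ⟨c, w₁⟩
  · simp at hp
  · simp only [List.head?_cons, Option.some.injEq] at hp
    subst hp
    rcases w₁ with _ | ⟨d, w₂⟩
    · simp
    · simp only [List.tail_cons, List.head?_cons, ne_eq, Option.some.injEq]
      intro hd; subst hd
      exact h rfl

lemma comp_x {w : List (Fin 2 × Bool)} (hw : reduce w = w) (hne : w.take 2 ≠ [nb, na]) :
    (reduce ([na, nb, pa, pb] ++ w)).take 2 = [na, nb] := by
  by_cases hp : w.head? = some nb
  · rcases w with _ | ⟨c, w₁⟩
    · simp at hp
    · simp only [List.head?_cons, Option.some.injEq] at hp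
      subst hp
      have h2 : w₁.head? ≠ some na := head_of_take hne rfl
      have e : ([na, nb, pa, pb] ++ nb :: w₁) = [na, nb, pa] ++ pb :: (pb.1, !pb.2) :: w₁ := rfl
      rw [e, reduce_append_cancel [na, nb, pa] pb (by decide) hw]
      · rfl
      · intro r hr
        simp only [List.getLast?] at hr
        have : r = pa := by
          have := hr
          simp_all
        subst this
        exact h2
  · rw [reduce_append' _ (by decide) hw]
    · rfl
    · intro q hq
      have : q = pb := by simp_all [List.getLast?]
      subst this
      exact hp

end Concrete

section Concrete2

lemma comp_xinv {w : List (Fin 2 × Bool)} (hw : reduce w = w) (hne : w.take 2 ≠ [na, nb]) :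
    (reduce ([nb, na, pb, pa] ++ w)).take 2 = [nb, na] := by
  by_cases hp : w.head? = some na
  · rcases w with _ | ⟨c, w₁⟩
    · simp at hp
    · simp only [List.head?_cons, Option.some.injEq] at hp
      subst hp
      have h2 : w₁.head? ≠ some nb := head_of_take hne rfl
      have e : ([nb, na, pb, pa] ++ na :: w₁) = [nb, na, pb] ++ pa :: (pa.1, !pa.2) :: w₁ := rfl
      rw [e, reduce_append_cancel [nb, na, pb] pa (by decide) hw]
      · rfl
      · intro r hr
        have : r = pb := by simp_all [List.getLast?]
        subst this
        exact h2
  · rw [reduce_append' _ (by decide) hw]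
    · rfl
    · intro q hq
      have : q = pa := by simp_all [List.getLast?]
      subst this
      exact hp

lemma comp_y {w : List (Fin 2 × Bool)} (hw : reduce w = w) (hne : w.take 2 ≠ [nb, nb]) :
    (reduce ([na, na, nb, nb, pa, pa, pb, pb] ++ w)).take 2 = [na, na] := by
  by_cases hp : w.head? = some nb
  · rcases w with _ | ⟨c, w₁⟩
    · simp at hp
    · simp only [List.head?_cons, Option.some.injEq] at hp
      subst hp
      have h2 : w₁.head? ≠ some nb := head_of_take hne rfl
      have e : ([na, na, nb, nb, pa, pa, pb, pb] ++ nb :: w₁) =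
          [na, na, nb, nb, pa, pa, pb] ++ pb :: (pb.1, !pb.2) :: w₁ := rfl
      rw [e, reduce_append_cancel [na, na, nb, nb, pa, pa, pb] pb (by decide) hw]
      · rfl
      · intro r hr
        have : r = pb := by simp_all [List.getLast?]
        subst this
        exact h2
  · rw [reduce_append' _ (by decide) hw]
    · rfl
    · intro q hq
      have : q = pb := by simp_all [List.getLast?]
      subst this
      exact hp

lemma comp_yinv {w : List (Fin 2 × Bool)} (hw : reduce w = w) (hne : w.take 2 ≠ [na, na]) :
    (reduce ([nb, nb, na, na, pb, pb, pa, pa] ++ w)).take 2 = [nb, nb] := by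
  by_cases hp : w.head? = some na
  · rcases w with _ | ⟨c, w₁⟩
    · simp at hp
    · simp only [List.head?_cons, Option.some.injEq] at hp
      subst hp
      have h2 : w₁.head? ≠ some na := head_of_take hne rfl
      have e : ([nb, nb, na, na, pb, pb, pa, pa] ++ na :: w₁) =
          [nb, nb, na, na, pb, pb, pa] ++ pa :: (pa.1, !pa.2) :: w₁ := rfl
      rw [e, reduce_append_cancel [nb, nb, na, na, pb, pb, pa] pa (by decide) hw]
      · rfl
      · intro r hr
        have : r = pa := by simp_all [List.getLast?]
        subst this
        exact h2
  · rw [reduce_append' _ (by decide) hw]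
    · rfl
    · intro q hq
      have : q = pa := by simp_all [List.getLast?]
      subst this
      exact hp

end Concrete2

def Wset (p q : Fin 2 × Bool) : Set (FreeGroup (Fin 2)) :=
  {g | g.toWord.take 2 = [p, q]}

lemma Wset_disjoint {p q r s : Fin 2 × Bool} (h : ([p, q] : List (Fin 2 × Bool)) ≠ [r, s]) :
    Disjoint (Wset p q) (Wset r s) :=
  Set.disjoint_left.mpr fun _ hg hg' => h (hg.symm.trans hg')

lemma Wset_nonempty {p q : Fin 2 × Bool} (h : FreeGroup.reduce [p, q] = [p, q]) :
    (Wset p q).Nonempty :=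
  ⟨FreeGroup.mk [p, q], by simp only [Wset, Set.mem_setOf_eq, FreeGroup.toWord_mk, h]; rfl⟩

lemma mul_toWord' (x g : FreeGroup (Fin 2)) (P : List (Fin 2 × Bool)) (hx : x = FreeGroup.mk P) :
    (x * g).toWord = FreeGroup.reduce (P ++ g.toWord) := by
  conv_lhs => rw [hx, ← FreeGroup.mk_toWord (x := g)]
  rw [FreeGroup.mul_mk, FreeGroup.toWord_mk]

/-- In the free group `F` on two generators `a, b`, the commutators
`[a,b] = a⁻¹b⁻¹ab` and `[a²,b²]` freely generate a free subgroup of rank 2: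
the homomorphism from the free group of rank 2 sending the generators to
`[a,b]` and `[a²,b²]` is injective (so there is no nontrivial relation). -/
theorem stmt_5 :
    let a : FreeGroup (Fin 2) := FreeGroup.of 0
    let b : FreeGroup (Fin 2) := FreeGroup.of 1
    Function.Injective
      (FreeGroup.lift (fun i : Fin 2 =>
        if i = 0 then a⁻¹ * b⁻¹ * a * b
        else (a ^ 2)⁻¹ * (b ^ 2)⁻¹ * a ^ 2 * b ^ 2) :
        FreeGroup (Fin 2) →* FreeGroup (Fin 2)) := by
  intro a b
  have hx : a⁻¹ * b⁻¹ * a * b = FreeGroup.mk [na, nb, pa, pb] := by decide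
  have hy : (a ^ 2)⁻¹ * (b ^ 2)⁻¹ * a ^ 2 * b ^ 2 =
      FreeGroup.mk [na, na, nb, nb, pa, pa, pb, pb] := by decide
  have hxi : (a⁻¹ * b⁻¹ * a * b)⁻¹ = FreeGroup.mk [nb, na, pb, pa] := by decide
  have hyi : ((a ^ 2)⁻¹ * (b ^ 2)⁻¹ * a ^ 2 * b ^ 2)⁻¹ =
      FreeGroup.mk [nb, nb, na, na, pb, pb, pa, pa] := by decide
  refine FreeGroup.injective_lift_of_ping_pong _
    (fun i => if i = 0 then Wset na nb else Wset na na)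
    (fun i => if i = 0 then Wset nb na else Wset nb nb)
    ?_ ?_ ?_ ?_ ?_ ?_
  · intro i
    by_cases hi : i = 0 <;> simp only [hi, if_pos, if_neg, reduceIte] <;>
      exact Wset_nonempty (by decide)
  · intro i j hij
    fin_cases i <;> fin_cases j <;> simp_all <;>
      exact Wset_disjoint (by decide)
  · intro i j hij
    fin_cases i <;> fin_cases j <;> simp_all <;>
      exact Wset_disjoint (by decide)
  · intro i j
    fin_cases i <;> fin_cases j <;> simp_all <;>
      exact Wset_disjoint (by decide)
  · intro i
    fin_cases i <;> rintro _ ⟨g, hg, rfl⟩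
    · show ((a⁻¹ * b⁻¹ * a * b) * g).toWord.take 2 = [na, nb]
      rw [mul_toWord' _ _ _ hx]
      exact comp_x g.reduce_toWord hg
    · show (((a ^ 2)⁻¹ * (b ^ 2)⁻¹ * a ^ 2 * b ^ 2) * g).toWord.take 2 = [na, na]
      rw [mul_toWord' _ _ _ hy]
      exact comp_y g.reduce_toWord hg
  · intro i
    fin_cases i <;> rintro _ ⟨g, hg, rfl⟩
    · show ((a⁻¹ * b⁻¹ * a * b)⁻¹ * g).toWord.take 2 = [nb, na]
      rw [mul_toWord' _ _ _ hxi]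
      exact comp_xinv g.reduce_toWord hg
    · show (((a ^ 2)⁻¹ * (b ^ 2)⁻¹ * a ^ 2 * b ^ 2)⁻¹ * g).toWord.take 2 = [nb, nb]
      rw [mul_toWord' _ _ _ hyi]
      exact comp_yinv g.reduce_toWord hg
end

section
/- Let F be the free group on a₁, b₁, and define inductively a_{i+1} = [a_i, b_i], b_{i+1} = [a_i², b_i²]. Then a_i ≠ e for every i. -/
open FreeGroup

variable {α : Type*} [DecidableEq α]

lemma my_head_pair (p q : α × Bool) (M : List (α × Bool))
    (h : FreeGroup.reduce (p :: q :: M) = p :: q :: M) : q ≠ (p.1, !p.2) := by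
  intro hq
  have hstep : FreeGroup.Red.Step (p :: q :: M) M := by
    subst hq
    exact FreeGroup.Red.Step.cons_not
  have h2 : FreeGroup.reduce (p :: q :: M) = FreeGroup.reduce M :=
    FreeGroup.reduce.Step.eq hstep
  have h3 : (FreeGroup.reduce M).length ≤ M.length :=
    FreeGroup.Red.length_le FreeGroup.reduce.red
  rw [h] at h2
  have := congrArg List.length h2
  simp at this
  omega

lemma my_tail_reduced (p : α × Bool) (L : List (α × Bool))
    (h : FreeGroup.reduce (p :: L) = p :: L) : FreeGroup.reduce L = L := by
  have hred : FreeGroup.Red (p :: L) (p :: FreeGroup.reduce L) :=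
    FreeGroup.Red.cons_cons FreeGroup.reduce.red
  have h2 : FreeGroup.reduce (p :: L) = p :: FreeGroup.reduce L :=
    FreeGroup.reduce.min (by rw [h]; exact hred)
  rw [h] at h2
  injection h2 with _ h3
  exact h3.symm

lemma my_step (x : α) (b : Bool) (w : FreeGroup α)
    (h : ∀ tl, w.toWord ≠ (x, !b) :: tl) :
    (FreeGroup.mk [(x, b)] * w).toWord = (x, b) :: w.toWord := by
  conv_lhs => rw [← FreeGroup.mk_toWord (x := w), FreeGroup.mul_mk, FreeGroup.toWord_mk]
  rw [List.singleton_append, FreeGroup.reduce.cons]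
  rw [show FreeGroup.reduce w.toWord = w.toWord from FreeGroup.reduce_toWord w]
  cases hw : w.toWord with
  | nil => rfl
  | cons hd tl =>
    have : ¬((x, b).1 = hd.1 ∧ (x, b).2 = !hd.2) := by
      rintro ⟨h1, h2⟩
      exact h tl (by rw [hw]; congr 1; ext <;> simp_all)
    simp [this]

lemma my_stepc (x : α) (b : Bool) (w : FreeGroup α) (tl : List (α × Bool))
    (h : w.toWord = (x, !b) :: tl) :
    (FreeGroup.mk [(x, b)] * w).toWord = tl := by
  conv_lhs => rw [← FreeGroup.mk_toWord (x := w), FreeGroup.mul_mk, FreeGroup.toWord_mk]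
  rw [List.singleton_append, FreeGroup.reduce.cons]
  rw [show FreeGroup.reduce w.toWord = w.toWord from FreeGroup.reduce_toWord w, h]
  simp

lemma my_prepend (L : List (α × Bool)) (w : FreeGroup α)
    (hred : FreeGroup.reduce L = L)
    (hlast : ∀ p ∈ L.getLast?, ∀ tl, w.toWord ≠ (p.1, !p.2) :: tl) :
    (FreeGroup.mk L * w).toWord = L ++ w.toWord := by
  induction L with
  | nil => simp [← FreeGroup.one_eq_mk]
  | cons p L ih =>
    have hmk : FreeGroup.mk (p :: L) = FreeGroup.mk [p] * FreeGroup.mk L := by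
      rw [FreeGroup.mul_mk]; rfl
    rw [hmk, mul_assoc]
    cases L with
    | nil =>
      simp only [← FreeGroup.one_eq_mk, one_mul]
      have := my_step p.1 p.2 w (hlast p (by simp))
      simpa using this
    | cons q M =>
      have hredL : FreeGroup.reduce (q :: M) = q :: M := my_tail_reduced p _ hred
      have ihh : (FreeGroup.mk (q :: M) * w).toWord = (q :: M) ++ w.toWord := by
        apply ih hredL
        intro r hr tl
        exact hlast r (by rw [List.getLast?_cons_cons]; exact hr) tl
      have hq : q ≠ (p.1, !p.2) := my_head_pair p q M hred
      have hs := my_step p.1 p.2 (FreeGroup.mk (q :: M) * w) ?_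
      · rw [ihh] at hs
        simpa using hs
      · intro tl hcon
        rw [ihh] at hcon
        simp only [List.cons_append] at hcon
        injection hcon with h1 _
        exact hq h1

namespace Stmt8Aux

abbrev F2 : Type := FreeGroup (Fin 2)

lemma prefix_reduced (M N : List (Fin 2 × Bool))
    (h : FreeGroup.reduce (M ++ N) = M ++ N) : FreeGroup.reduce M = M := by
  have hred : FreeGroup.Red (M ++ N) (FreeGroup.reduce M ++ N) :=
    FreeGroup.Red.append_append FreeGroup.reduce.red FreeGroup.Red.refl
  have h2 : FreeGroup.reduce (M ++ N) = FreeGroup.reduce M ++ N :=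
    FreeGroup.reduce.min (by rw [h]; exact hred)
  rw [h] at h2
  have hlen : M.length = (FreeGroup.reduce M).length := by
    have := congrArg List.length h2
    simp at this
    omega
  exact (List.append_inj_left h2.symm hlen.symm)

lemma master (m1 m2 : Fin 2 × Bool) (M' : List (Fin 2 × Bool)) (x y : Fin 2) (c : Bool)
    (w : F2)
    (hred : FreeGroup.reduce ((m1 :: m2 :: M') ++ [(x, true)]) = (m1 :: m2 :: M') ++ [(x, true)])
    (hlastM : (m1 :: m2 :: M').getLast? = some (y, c))
    (hw : (∀ tl, w.toWord ≠ (x, false) :: tl) ∨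
      (∃ tl, w.toWord = (x, false) :: tl ∧ ∀ tl', tl ≠ (y, !c) :: tl')) :
    ∃ rest, (FreeGroup.mk ((m1 :: m2 :: M') ++ [(x, true)]) * w).toWord = m1 :: m2 :: rest := by
  set M : List (Fin 2 × Bool) := m1 :: m2 :: M' with hM
  rcases hw with hw | ⟨tl, hw1, hw2⟩
  · have h := my_prepend (M ++ [(x, true)]) w hred (by
      intro r hr tl hcon
      rw [List.getLast?_concat] at hr
      rw [Option.mem_some_iff] at hr
      subst hr
      exact hw tl hcon)
    exact ⟨M' ++ [(x, true)] ++ w.toWord, by rw [h, hM]; simp⟩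
  · have hv : (FreeGroup.mk [(x, true)] * w).toWord = tl :=
      my_stepc x true w tl (by rw [hw1]; rfl)
    have hsplit : FreeGroup.mk (M ++ [(x, true)]) * w =
        FreeGroup.mk M * (FreeGroup.mk [(x, true)] * w) := by
      rw [← mul_assoc, FreeGroup.mul_mk]
    have h := my_prepend M (FreeGroup.mk [(x, true)] * w)
        (prefix_reduced M [(x, true)] hred) (by
      intro r hr tl' hcon
      rw [hlastM, Option.mem_some_iff] at hr
      subst hr
      rw [hv] at hcon
      exact hw2 tl' hcon)
    exact ⟨M' ++ tl, by rw [hsplit, h, hv, hM]; simp⟩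

end Stmt8Aux

namespace Stmt8Aux2
open Stmt8Aux

def L0 : List (Fin 2 × Bool) := [(0, false), (1, false), (0, true), (1, true)]
def L0' : List (Fin 2 × Bool) := [(1, false), (0, false), (1, true), (0, true)]
def L1 : List (Fin 2 × Bool) :=
  [(0, false), (0, false), (1, false), (1, false), (0, true), (0, true), (1, true), (1, true)]
def L1' : List (Fin 2 × Bool) :=
  [(1, false), (1, false), (0, false), (0, false), (1, true), (1, true), (0, true), (0, true)]

def XA : Set F2 :=
  {w | ∃ q tl, w.toWord = ((0 : Fin 2), false) :: q :: tl ∧ q ≠ ((0 : Fin 2), false)}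
def XB : Set F2 := {w | ∃ tl, w.toWord = ((0 : Fin 2), false) :: ((0 : Fin 2), false) :: tl}
def YA : Set F2 :=
  {w | ∃ q tl, w.toWord = ((1 : Fin 2), false) :: q :: tl ∧ q ≠ ((1 : Fin 2), false)}
def YB : Set F2 := {w | ∃ tl, w.toWord = ((1 : Fin 2), false) :: ((1 : Fin 2), false) :: tl}

lemma hXA (w : F2) (hw : w ∉ YA) : FreeGroup.mk L0 * w ∈ XA := by
  have hcond : (∀ tl, w.toWord ≠ ((1 : Fin 2), false) :: tl) ∨
      (∃ tl, w.toWord = ((1 : Fin 2), false) :: tl ∧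
        ∀ tl', tl ≠ ((0 : Fin 2), !true) :: tl') := by
    rcases hcase : w.toWord with _ | ⟨p, tl⟩
    · exact Or.inl fun tl h => List.cons_ne_nil _ _ h.symm
    · by_cases hp : p = ((1 : Fin 2), false)
      · subst hp
        refine Or.inr ⟨tl, rfl, ?_⟩
        intro tl' h
        rcases tl with _ | ⟨q, tl2⟩
        · exact List.cons_ne_nil _ _ h.symm
        · injection h with h1 _
          exact hw ⟨q, tl2, hcase, by rw [h1]; decide⟩
      · left
        intro tl' h
        injection h with h1 _
        exact hp h1
  obtain ⟨rest, hrest⟩ :=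
    master (0, false) (1, false) [(0, true)] 1 0 true w (by decide) (by decide) hcond
  exact ⟨(1, false), rest, hrest, by decide⟩

lemma hXB (w : F2) (hw : w ∉ YB) : FreeGroup.mk L1 * w ∈ XB := by
  have hcond : (∀ tl, w.toWord ≠ ((1 : Fin 2), false) :: tl) ∨
      (∃ tl, w.toWord = ((1 : Fin 2), false) :: tl ∧
        ∀ tl', tl ≠ ((1 : Fin 2), !true) :: tl') := by
    rcases hcase : w.toWord with _ | ⟨p, tl⟩
    · exact Or.inl fun tl h => List.cons_ne_nil _ _ h.symm
    · by_cases hp : p = ((1 : Fin 2), false)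
      · subst hp
        refine Or.inr ⟨tl, rfl, ?_⟩
        intro tl' h
        exact hw ⟨tl', by rw [hcase, h]; rfl⟩
      · left
        intro tl' h
        injection h with h1 _
        exact hp h1
  obtain ⟨rest, hrest⟩ :=
    master (0, false) (0, false) [(1, false), (1, false), (0, true), (0, true), (1, true)]
      1 1 true w (by decide) (by decide) hcond
  exact ⟨rest, hrest⟩

lemma hYA (w : F2) (hw : w ∉ XA) : FreeGroup.mk L0' * w ∈ YA := by
  have hcond : (∀ tl, w.toWord ≠ ((0 : Fin 2), false) :: tl) ∨
      (∃ tl, w.toWord = ((0 : Fin 2), false) :: tl ∧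
        ∀ tl', tl ≠ ((1 : Fin 2), !true) :: tl') := by
    rcases hcase : w.toWord with _ | ⟨p, tl⟩
    · exact Or.inl fun tl h => List.cons_ne_nil _ _ h.symm
    · by_cases hp : p = ((0 : Fin 2), false)
      · subst hp
        refine Or.inr ⟨tl, rfl, ?_⟩
        intro tl' h
        rcases tl with _ | ⟨q, tl2⟩
        · exact List.cons_ne_nil _ _ h.symm
        · injection h with h1 _
          exact hw ⟨q, tl2, hcase, by rw [h1]; decide⟩
      · left
        intro tl' h
        injection h with h1 _
        exact hp h1
  obtain ⟨rest, hrest⟩ :=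
    master (1, false) (0, false) [(1, true)] 0 1 true w (by decide) (by decide) hcond
  exact ⟨(0, false), rest, hrest, by decide⟩

lemma hYB (w : F2) (hw : w ∉ XB) : FreeGroup.mk L1' * w ∈ YB := by
  have hcond : (∀ tl, w.toWord ≠ ((0 : Fin 2), false) :: tl) ∨
      (∃ tl, w.toWord = ((0 : Fin 2), false) :: tl ∧
        ∀ tl', tl ≠ ((0 : Fin 2), !true) :: tl') := by
    rcases hcase : w.toWord with _ | ⟨p, tl⟩
    · exact Or.inl fun tl h => List.cons_ne_nil _ _ h.symm
    · by_cases hp : p = ((0 : Fin 2), false)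
      · subst hp
        refine Or.inr ⟨tl, rfl, ?_⟩
        intro tl' h
        exact hw ⟨tl', by rw [hcase, h]; rfl⟩
      · left
        intro tl' h
        injection h with h1 _
        exact hp h1
  obtain ⟨rest, hrest⟩ :=
    master (1, false) (1, false) [(0, false), (0, false), (1, true), (1, true), (0, true)]
      0 0 true w (by decide) (by decide) hcond
  exact ⟨rest, hrest⟩

end Stmt8Aux2

namespace Stmt8Aux2
open Stmt8Aux FreeGroup

def gens : Fin 2 → F2 := ![FreeGroup.mk L0, FreeGroup.mk L1]
def Xs : Fin 2 → Set F2 := ![XA, XB]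
def Ys : Fin 2 → Set F2 := ![YA, YB]

lemma mem1 : FreeGroup.mk [((0 : Fin 2), false), (1, false)] ∈ XA :=
  ⟨(1, false), [], by rw [FreeGroup.toWord_mk]; decide, by decide⟩
lemma mem2 : FreeGroup.mk [((0 : Fin 2), false), (0, false)] ∈ XB :=
  ⟨[], by rw [FreeGroup.toWord_mk]; decide⟩
lemma mem3 : FreeGroup.mk [((1 : Fin 2), false), (0, false)] ∈ YA :=
  ⟨(0, false), [], by rw [FreeGroup.toWord_mk]; decide, by decide⟩
lemma mem4 : FreeGroup.mk [((1 : Fin 2), false), (1, false)] ∈ YB :=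
  ⟨[], by rw [FreeGroup.toWord_mk]; decide⟩

lemma dXAXB : Disjoint XA XB := by
  rw [Set.disjoint_left]
  rintro w ⟨q, tl, h1, hq⟩ ⟨tl', h2⟩
  rw [h1] at h2
  injection h2 with _ h3
  injection h3 with h4 _
  exact hq h4

lemma dYAYB : Disjoint YA YB := by
  rw [Set.disjoint_left]
  rintro w ⟨q, tl, h1, hq⟩ ⟨tl', h2⟩
  rw [h1] at h2
  injection h2 with _ h3
  injection h3 with h4 _
  exact hq h4

lemma headXA (w : F2) (hw : w ∈ XA ∪ XB) :
    ∃ tl, w.toWord = ((0 : Fin 2), false) :: tl := by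
  rcases hw with ⟨q, tl, h1, _⟩ | ⟨tl, h1⟩
  · exact ⟨_, h1⟩
  · exact ⟨_, h1⟩

lemma headYA (w : F2) (hw : w ∈ YA ∪ YB) :
    ∃ tl, w.toWord = ((1 : Fin 2), false) :: tl := by
  rcases hw with ⟨q, tl, h1, _⟩ | ⟨tl, h1⟩
  · exact ⟨_, h1⟩
  · exact ⟨_, h1⟩

lemma dXY (S T : Set F2) (hS : S = XA ∨ S = XB) (hT : T = YA ∨ T = YB) : Disjoint S T := by
  rw [Set.disjoint_left]
  intro w hw1 hw2
  obtain ⟨tl, h1⟩ := headXA w (by rcases hS with rfl | rfl; exacts [Or.inl hw1, Or.inr hw1])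
  obtain ⟨tl', h2⟩ := headYA w (by rcases hT with rfl | rfl; exacts [Or.inl hw2, Or.inr hw2])
  rw [h1] at h2
  injection h2 with h3 _
  exact absurd h3 (by decide)

lemma inv0 : (FreeGroup.mk L0)⁻¹ = FreeGroup.mk L0' := by
  rw [FreeGroup.inv_mk]; rfl

lemma inv1 : (FreeGroup.mk L1)⁻¹ = FreeGroup.mk L1' := by
  rw [FreeGroup.inv_mk]; rfl

lemma lift_inj : Function.Injective (FreeGroup.lift gens) := by
  apply FreeGroup.injective_lift_of_ping_pong gens Xs Ys
  · intro i
    fin_cases i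
    · exact ⟨_, mem1⟩
    · exact ⟨_, mem2⟩
  · intro i j hij
    fin_cases i <;> fin_cases j <;> simp_all [Xs] <;>
      first
        | exact dXAXB
        | exact dXAXB.symm
  · intro i j hij
    fin_cases i <;> fin_cases j <;> simp_all [Ys] <;>
      first
        | exact dYAYB
        | exact dYAYB.symm
  · intro i j
    fin_cases i <;> fin_cases j <;>
      simp only [Xs, Ys, Matrix.cons_val_zero, Matrix.cons_val_one, Matrix.head_cons] <;>
      [exact dXY _ _ (Or.inl rfl) (Or.inl rfl); exact dXY _ _ (Or.inl rfl) (Or.inr rfl);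
       exact dXY _ _ (Or.inr rfl) (Or.inl rfl); exact dXY _ _ (Or.inr rfl) (Or.inr rfl)]
  · intro i
    rintro v ⟨w, hw, rfl⟩
    match i with
    | 0 => exact hXA w hw
    | 1 => exact hXB w hw
  · intro i
    rintro v ⟨w, hw, rfl⟩
    match i with
    | 0 =>
      show (FreeGroup.mk L0)⁻¹ * w ∈ YA
      rw [inv0]
      exact hYA w hw
    | 1 =>
      show (FreeGroup.mk L1)⁻¹ * w ∈ YB
      rw [inv1]
      exact hYB w hw

lemma g0_eq : FreeGroup.mk L0 =
    (FreeGroup.of (0 : Fin 2))⁻¹ * (FreeGroup.of (1 : Fin 2))⁻¹ *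
      FreeGroup.of (0 : Fin 2) * FreeGroup.of (1 : Fin 2) := by
  rw [show FreeGroup.of (0 : Fin 2) = FreeGroup.mk [((0 : Fin 2), true)] from rfl,
    show FreeGroup.of (1 : Fin 2) = FreeGroup.mk [((1 : Fin 2), true)] from rfl,
    FreeGroup.inv_mk, FreeGroup.inv_mk, FreeGroup.mul_mk, FreeGroup.mul_mk, FreeGroup.mul_mk]
  rfl

lemma g1_eq : FreeGroup.mk L1 =
    (FreeGroup.of (0 : Fin 2) ^ 2)⁻¹ * (FreeGroup.of (1 : Fin 2) ^ 2)⁻¹ *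
      FreeGroup.of (0 : Fin 2) ^ 2 * FreeGroup.of (1 : Fin 2) ^ 2 := by
  rw [pow_two, pow_two,
    show FreeGroup.of (0 : Fin 2) = FreeGroup.mk [((0 : Fin 2), true)] from rfl,
    show FreeGroup.of (1 : Fin 2) = FreeGroup.mk [((1 : Fin 2), true)] from rfl]
  simp only [FreeGroup.mul_mk, FreeGroup.inv_mk]
  rfl

end Stmt8Aux2

/-- With `a_{i+1} = [a_i, b_i]`, `b_{i+1} = [a_i², b_i²]` in the free group on
`a₁, b₁`, one has `a_i ≠ e` for every `i ≥ 1`. -/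
theorem stmt_8 (a b : ℕ → FreeGroup (Fin 2))
    (ha1 : a 1 = FreeGroup.of 0) (hb1 : b 1 = FreeGroup.of 1)
    (ha : ∀ i ≥ 1, a (i + 1) = (a i)⁻¹ * (b i)⁻¹ * a i * b i)
    (hb : ∀ i ≥ 1, b (i + 1) = (a i ^ 2)⁻¹ * (b i ^ 2)⁻¹ * a i ^ 2 * b i ^ 2) :
    ∀ i ≥ 1, a i ≠ 1 := by
  open Stmt8Aux Stmt8Aux2 in
  have key : ∀ i, 1 ≤ i → ∃ ψ : FreeGroup (Fin 2) →* FreeGroup (Fin 2),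
      Function.Injective ψ ∧ ψ (FreeGroup.of 0) = a i ∧ ψ (FreeGroup.of 1) = b i := by
    intro i hi
    induction i, hi using Nat.le_induction with
    | base => exact ⟨MonoidHom.id _, Function.injective_id, by rw [ha1]; rfl, by rw [hb1]; rfl⟩
    | succ n hn ih =>
      obtain ⟨ψ, hinj, h0, h1⟩ := ih
      refine ⟨ψ.comp (FreeGroup.lift Stmt8Aux2.gens), hinj.comp Stmt8Aux2.lift_inj, ?_, ?_⟩
      · rw [MonoidHom.comp_apply, FreeGroup.lift_apply_of,
          show Stmt8Aux2.gens 0 = FreeGroup.mk Stmt8Aux2.L0 from rfl, Stmt8Aux2.g0_eq,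
          ha n hn]
        simp only [_root_.map_mul, _root_.map_inv, h0, h1]
      · rw [MonoidHom.comp_apply, FreeGroup.lift_apply_of,
          show Stmt8Aux2.gens 1 = FreeGroup.mk Stmt8Aux2.L1 from rfl, Stmt8Aux2.g1_eq,
          hb n hn]
        simp only [_root_.map_mul, _root_.map_inv, _root_.map_pow, h0, h1]
  intro i hi
  obtain ⟨ψ, hinj, h0, -⟩ := key i hi
  rw [← h0]
  intro hcon
  exact FreeGroup.of_ne_one (0 : Fin 2) (hinj (by rw [hcon, _root_.map_one]))
end

section
/- Let F be the free group on a₁, b₁ with a_{i+1} = [a_i, b_i], b_{i+1} = [a_i², b_i²], and let (n_k) be an increasing sequence with a_{n_k} ∉ F_{n_{k+1}} for all k. For sequences ε, ε' ∈ {0,1}^ℕ, if the finite products a_{n_1}^{ε_1}⋯a_{n_k}^{ε_k} and a_{n_1}^{ε'_1}⋯a_{n_k}^{ε'_k} are equal in F/F_{n_{k+1}} for all k, then ε = ε'. -/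
/-- With `a_{i+1} = [a_i, b_i]`, `b_{i+1} = [a_i², b_i²]` in the free group `F`
on `a₁, b₁`, and `(n_k)` strictly increasing with `a_{n_k} ∉ F_{n_{k+1}}` for
`k ≥ 1` (paper's `F_m` is `lowerCentralSeries F (m-1)`): if two 0-1 sequences
`ε, ε'` (indexed from 1) satisfy that the products
`a_{n_1}^{ε_1} ⋯ a_{n_k}^{ε_k}` and `a_{n_1}^{ε'_1} ⋯ a_{n_k}^{ε'_k}` are
equal in `F/F_{n_{k+1}}` for every `k ≥ 1`, then `ε = ε'`. -/
theorem stmt_15 (a b : ℕ → FreeGroup (Fin 2))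
    (ha1 : a 1 = FreeGroup.of 0) (hb1 : b 1 = FreeGroup.of 1)
    (ha : ∀ i ≥ 1, a (i + 1) = (a i)⁻¹ * (b i)⁻¹ * a i * b i)
    (hb : ∀ i ≥ 1, b (i + 1) = (a i ^ 2)⁻¹ * (b i ^ 2)⁻¹ * a i ^ 2 * b i ^ 2)
    (n : ℕ → ℕ) (hn : StrictMono n) (hn0 : n 0 = 1) (hn1 : n 1 = 2)
    (hnot : ∀ k ≥ 1, a (n k) ∉ Subgroup.lowerCentralSeries (⊤ : Subgroup (FreeGroup (Fin 2))) (n (k + 1) - 1))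
    (ε ε' : ℕ → Fin 2)
    (heq : ∀ k ≥ 1,
      (QuotientGroup.mk (((List.range k).map
            (fun j => a (n (j + 1)) ^ ((ε (j + 1) : ℕ)))).prod) :
          FreeGroup (Fin 2) ⧸ Subgroup.lowerCentralSeries (⊤ : Subgroup (FreeGroup (Fin 2))) (n (k + 1) - 1)) =
        QuotientGroup.mk (((List.range k).map
            (fun j => a (n (j + 1)) ^ ((ε' (j + 1) : ℕ)))).prod)) :
    ∀ k ≥ 1, ε k = ε' k := by
  intro k hk
  obtain ⟨m, rfl⟩ : ∃ m, k = m + 1 := ⟨k - 1, (Nat.succ_pred_eq_of_pos hk).symm⟩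
  clear hk
  induction m using Nat.strong_induction_on with
  | _ m IH =>
    have h := heq (m + 1) (Nat.succ_le_succ (Nat.zero_le m))
    rw [List.range_succ] at h
    simp only [List.map_append, List.prod_append, List.map_cons, List.map_nil,
      List.prod_cons, List.prod_nil, mul_one] at h
    have hpre : ((List.range m).map (fun j => a (n (j + 1)) ^ ((ε (j + 1) : ℕ)))).prod
        = ((List.range m).map (fun j => a (n (j + 1)) ^ ((ε' (j + 1) : ℕ)))).prod := by
      congr 1
      apply List.map_congr_left
      intro j hj
      rw [IH j (List.mem_range.mp hj)]
    rw [hpre, QuotientGroup.eq, mul_inv_rev] at h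
    have h : (a (n (m + 1)) ^ ((ε (m + 1) : ℕ)))⁻¹ * a (n (m + 1)) ^ ((ε' (m + 1) : ℕ)) ∈
        Subgroup.lowerCentralSeries (⊤ : Subgroup (FreeGroup (Fin 2))) (n (m + 1 + 1) - 1) := by
      convert h using 1
      group
    by_contra hne
    apply hnot (m + 1) (Nat.succ_le_succ (Nat.zero_le m))
    have hcases : ((ε (m + 1) : ℕ) = 0 ∧ (ε' (m + 1) : ℕ) = 1) ∨
        ((ε (m + 1) : ℕ) = 1 ∧ (ε' (m + 1) : ℕ) = 0) := by
      have h1 := (ε (m + 1)).isLt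
      have h2 := (ε' (m + 1)).isLt
      have h3 : (ε (m + 1) : ℕ) ≠ (ε' (m + 1) : ℕ) := fun hh => hne (Fin.ext hh)
      omega
    rcases hcases with ⟨h1, h2⟩ | ⟨h1, h2⟩
    · rw [h1, h2] at h
      simpa using h
    · rw [h1, h2] at h
      simp only [pow_one, pow_zero, mul_one] at h
      exact (Subgroup.lowerCentralSeries (⊤ : Subgroup (FreeGroup (Fin 2))) (n (m + 1 + 1) - 1)).inv_mem_iff.mp h
end
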